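/- arXiv:1611.07682 — 3 statements merged into one kernel-verified Lean document; each statement's English description precedes it below -/
import Mathlib

section
/- Let A, B be symmetric n×n real matrices with zero diagonal, C an n×n real matrix, and M a real number. Construct the directed multigraph G with vertices w_1, …, w_{n+1} and, for each i, j ∈ {1,…,n}, an arc (w_j, w_{j+1})^i (the i-th parallel arc from w_j to w_{j+1}); set the source s = w_1 and target t = w_{n+1}. Define linear costs c_e = C_{ij} for e = (w_j, w_{j+1})^i, and interaction costs q_{e,f} = A_{ik}·B_{jl} for e = (w_j, w_{j+1})^i and f = (w_l, w_{l+1})^k with j ≠ l, q_{e,f} = M if j = l and i ≠ k, and q_{e,f} = 0 for all other pairs of arcs. Then for every permutation π of {1,…,n}, the s-t path consisting of the arcs (w_{π(i)}, w_{π(i)+1})^i for i = 1,…,n has cost C(P,c,Q) equal to the QAP objective Σ_{i,k} A_{ik} B_{π(i)π(k)} + Σ_i C_{i,π(i)}. -/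
/-- Reduction from QAP to QSPP: in the multigraph with vertices `w_1,…,w_{n+1}`, where
the arc `(i,j)` denotes the `i`-th parallel arc from `w_j` to `w_{j+1}`, the cost
`C(P,c,Q)` of the `s`-`t` path consisting of the arcs `(w_{π(i)}, w_{π(i)+1})^i`
(whose arc set is `{(i, π i) : i}`) equals the QAP objective value of `π`. -/
theorem stmt_0 (n : ℕ) (A B C : Matrix (Fin n) (Fin n) ℝ) (M : ℝ)
    (hAs : ∀ i k, A i k = A k i) (hBs : ∀ j l, B j l = B l j)
    (hAd : ∀ i, A i i = 0) (hBd : ∀ j, B j j = 0)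
    (c : Fin n × Fin n → ℝ) (q : Fin n × Fin n → Fin n × Fin n → ℝ)
    (hc : ∀ e : Fin n × Fin n, c e = C e.1 e.2)
    (hq : ∀ e f : Fin n × Fin n,
      q e f = if e.2 ≠ f.2 then A e.1 f.1 * B e.2 f.2
              else if e.1 ≠ f.1 then M else 0)
    (π : Equiv.Perm (Fin n)) :
    (∑ e ∈ Finset.univ.image (fun i : Fin n => (i, π i)),
        ∑ f ∈ Finset.univ.image (fun i : Fin n => (i, π i)), q e f)
      + (∑ e ∈ Finset.univ.image (fun i : Fin n => (i, π i)), c e) =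
    (∑ i : Fin n, ∑ k : Fin n, A i k * B (π i) (π k)) + ∑ i : Fin n, C i (π i) := by
  have hinj : Set.InjOn (fun i : Fin n => (i, π i)) ↑(Finset.univ : Finset (Fin n)) := by
    intro a _ b _ h
    exact (Prod.mk.injEq _ _ _ _ ▸ h).1
  rw [Finset.sum_image hinj, Finset.sum_image hinj]
  congr 1
  · apply Finset.sum_congr rfl
    intro i _
    rw [Finset.sum_image hinj]
    apply Finset.sum_congr rfl
    intro k _
    rw [hq]
    by_cases h : i = k
    · subst h
      simp [hAd, hBd]
    · have : π i ≠ π k := fun he => h (π.injective he)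
      simp [this]
  · exact Finset.sum_congr rfl fun i _ => hc _
end

section
/- Let G=(V,A) be a directed acyclic graph, s,t ∈ V, c a nonnegative linear cost vector and Q a nonnegative symmetric interaction cost matrix with zero diagonal such that q_{ef}=0 whenever arcs e and f are not adjacent (an adjacent QSPP instance). Define the auxiliary graph G'=(V',A') with V' = {V_{(s,s)}, V_{(t,t)}} ∪ {V_e : e ∈ A} and A' = {(V_{(i,j)}, V_{(j,l)}) : i ≠ l}, and linear costs c'_{(V_e,V_f)} = c_f if e=(s,s), c'_{(V_e,V_f)} = 0 if f=(t,t), and c'_{(V_e,V_f)} = c_f + 2q_{e,f} otherwise. Then the map sending an s-t path P=(v_1,…,v_k) in G (with v_1=s, v_k=t) to P' = (V_{(v_1,v_1)}, V_{(v_1,v_2)}, V_{(v_2,v_3)}, …, V_{(v_{k-1},v_k)}, V_{(v_k,v_k)}) is a bijection between s-t paths in G and V_{(s,s)}-V_{(t,t)} paths in G', and it preserves cost: C(P,c,Q) = C(P',c'). -/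
/-- An `s`-`t` path in the digraph on vertex type `V` with arc relation `A`,
represented as the list of its (distinct) vertices. -/
def IsPath {V : Type*} (A : V → V → Prop) (s t : V) (P : List V) : Prop :=
  2 ≤ P.length ∧ P.head? = some s ∧ P.getLast? = some t ∧ P.Nodup ∧ P.Chain' A

/-- The arcs traversed by a path, as the list of ordered pairs of consecutive vertices. -/
def arcsOf {V : Type*} (P : List V) : List (V × V) :=
  P.zip P.tail

/-- Linear cost `C(P,c)` of a path. -/
noncomputable def linCost {V : Type*} (c : V × V → ℝ) (P : List V) : ℝ :=
  ((arcsOf P).map c).sum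

/-- Total (quadratic) cost `C(P,c,Q)` of a path: the sum of the interaction costs over all
ordered pairs of arcs of `P` plus the sum of the linear costs of the arcs of `P`. -/
noncomputable def cost {V : Type*} (c : V × V → ℝ) (Q : V × V → V × V → ℝ)
    (P : List V) : ℝ :=
  ((arcsOf P).map fun e => ((arcsOf P).map fun f => Q e f).sum).sum + linCost c P

/-- A QSPP instance `(G,s,t,c,Q)` is linearizable if there is a nonnegative cost vector `c'`
such that `C(P,c,Q) = C(P,c')` for every `s`-`t` path `P`. -/
def Linearizable {V : Type*} (A : V → V → Prop) (s t : V) (c : V × V → ℝ)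
    (Q : V × V → V × V → ℝ) : Prop :=
  ∃ c' : V × V → ℝ, (∀ e, 0 ≤ c' e) ∧
    ∀ P, IsPath A s t P → cost c Q P = linCost c' P

open Classical

section AuxLemmas

variable {V : Type*}

lemma arcsOf_cons_cons (a b : V) (l : List V) :
    arcsOf (a :: b :: l) = (a, b) :: arcsOf (b :: l) := rfl

lemma length_arcsOf (P : List V) : (arcsOf P).length = P.length - 1 := by
  simp [arcsOf]

lemma getElem_arcsOf (P : List V) (i : ℕ) (h : i < P.length - 1) :
    (arcsOf P)[i]'(by rw [length_arcsOf]; exact h) =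
      (P[i]'(by omega), P[i+1]'(by omega)) := by
  simp only [arcsOf, List.getElem_zip, List.getElem_tail]

lemma map_fst_arcsOf : ∀ (P : List V), (arcsOf P).map Prod.fst = P.dropLast
  | [] => rfl
  | [_] => rfl
  | a :: b :: l => by
    rw [arcsOf_cons_cons, List.map_cons, map_fst_arcsOf (b :: l)]
    rfl

lemma map_snd_arcsOf (P : List V) : (arcsOf P).map Prod.snd = P.tail :=
  List.map_snd_zip (by cases P <;> simp)

lemma mem_arcsOf {A : V → V → Prop} :
    ∀ {P : List V}, P.Chain' A → ∀ {e : V × V}, e ∈ arcsOf P → A e.1 e.2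
  | [], _, _, h => by simp [arcsOf] at h
  | [_], _, _, h => by simp [arcsOf] at h
  | a :: b :: l, hch, e, h => by
    rw [arcsOf_cons_cons, List.mem_cons] at h
    rcases h with h | h
    · subst h; exact (List.isChain_cons_cons.mp hch).1
    · exact mem_arcsOf (List.isChain_cons_cons.mp hch).2 h

lemma nodup_of_chain' {A : V → V → Prop} (hacyc : ∀ v, ¬ Relation.TransGen A v v)
    {P : List V} (h : P.Chain' A) : P.Nodup := by
  haveI : IsTrans V (Relation.TransGen A) := ⟨fun _ _ _ => Relation.TransGen.trans⟩
  have h2 : P.Chain' (Relation.TransGen A) := h.imp fun _ _ hab => Relation.TransGen.single hab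
  have h3 := List.isChain_iff_pairwise.mp h2
  have h4 : P.Pairwise (fun a b => a ≠ b) :=
    h3.imp fun {a b} hab (heq : a = b) => hacyc a (by rw [← heq] at hab; exact hab)
  exact h4

lemma arcsOf_map_fst : ∀ {L : List (V × V)},
    L.Chain' (fun e f => e.2 = f.1) → arcsOf (L.map Prod.fst) = L.dropLast
  | [], _ => rfl
  | [_], _ => rfl
  | e :: f :: L, h => by
    obtain ⟨h1, h2⟩ := List.isChain_cons_cons.mp h
    have ih := arcsOf_map_fst h2
    simp only [List.map_cons] at ih ⊢
    rw [arcsOf_cons_cons, ih]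
    have he : (e.1, f.1) = e := by rw [← h1]
    rw [he]
    rfl

lemma sum_map_getD {α : Type*} (f : α → ℝ) (d : α) :
    ∀ (l : List α), (l.map f).sum = ∑ i ∈ Finset.range l.length, f (l.getD i d)
  | [] => by simp
  | a :: l => by
    rw [List.map_cons, List.sum_cons, sum_map_getD f d l, List.length_cons,
      Finset.sum_range_succ']
    simp [add_comm]

lemma chain'_getElem {α : Type*} {R : α → α → Prop} {l : List α} (h : l.Chain' R)
    (i : ℕ) (hi : i + 1 < l.length) : R (l[i]'(by omega)) (l[i+1]'hi) := by
  have := List.isChain_iff_getElem.mp h i (by omega)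
  simpa [List.get_eq_getElem] using this

lemma chain'_of_getElem {α : Type*} {R : α → α → Prop} {l : List α}
    (h : ∀ (i : ℕ) (hi : i + 1 < l.length), R (l[i]'(by omega)) (l[i+1]'hi)) :
    l.Chain' R := by
  rw [List.Chain', List.isChain_iff_getElem]
  intro i hi
  simpa [List.get_eq_getElem] using h i (by omega)

lemma double_sum_adj (q : ℕ → ℕ → ℝ) (hsym : ∀ i j, q i j = q j i) :
    ∀ (m : ℕ), (∀ i, i < m → q i i = 0) →
      (∀ i j, i < j → j < m → j ≠ i + 1 → q i j = 0) →
      ∑ i ∈ Finset.range m, ∑ j ∈ Finset.range m, q i j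
        = 2 * ∑ i ∈ Finset.range (m - 1), q i (i + 1) := by
  intro m
  induction m with
  | zero => simp
  | succ n ih =>
    intro hdiag hzero
    rw [Finset.sum_range_succ]
    rw [Finset.sum_congr rfl (fun i (_ : i ∈ Finset.range n) =>
      Finset.sum_range_succ (fun j => q i j) n), Finset.sum_add_distrib]
    rw [ih (fun i hi => hdiag i (by omega)) (fun i j h1 h2 h3 => hzero i j h1 (by omega) h3)]
    rw [Finset.sum_range_succ, hdiag n (by omega)]
    have hq : ∑ j ∈ Finset.range n, q n j = ∑ i ∈ Finset.range n, q i n :=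
      Finset.sum_congr rfl (fun j _ => hsym n j)
    rw [hq]
    rcases Nat.eq_zero_or_pos n with hn | hn
    · subst hn; simp
    · have hsingle : ∑ i ∈ Finset.range n, q i n = q (n-1) n := by
        rw [Finset.sum_eq_single (n-1)]
        · intro b hb hbne
          have hb' := Finset.mem_range.mp hb
          exact hzero b n (by omega) (by omega) (by omega)
        · intro h; exact absurd (Finset.mem_range.mpr (by omega)) h
      rw [hsingle]
      have h1 : n + 1 - 1 = (n - 1) + 1 := by omega
      rw [h1, Finset.sum_range_succ]
      have h2 : n - 1 + 1 = n := by omega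
      rw [h2]
      ring

lemma chain'_arcsOf {A : V → V → Prop} :
    ∀ {P : List V}, P.Chain' A → P.Nodup →
      (arcsOf P).Chain' (fun e f : V × V => A e.1 e.2 ∧ A f.1 f.2 ∧ e.2 = f.1 ∧ e.1 ≠ f.2)
  | [], _, _ => by simp [arcsOf, List.Chain']
  | [_], _, _ => by simp [arcsOf, List.Chain']
  | [a, b], _, _ => by simp [arcsOf, List.Chain']
  | a :: b :: c :: l, hch, hnd => by
    rw [arcsOf_cons_cons, arcsOf_cons_cons, List.Chain', List.isChain_cons_cons]
    obtain ⟨hab, hch2⟩ := List.isChain_cons_cons.mp hch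
    obtain ⟨hbc, _⟩ := List.isChain_cons_cons.mp hch2
    refine ⟨⟨hab, hbc, rfl, ?_⟩, ?_⟩
    · intro h
      have h' : a = c := h
      have hna : a ∉ b :: c :: l := (List.nodup_cons.mp hnd).1
      exact hna (by rw [h']; simp)
    · rw [← arcsOf_cons_cons]
      exact chain'_arcsOf hch2 (List.Nodup.of_cons hnd)

end AuxLemmas

section MainLemmas

variable {V : Type*} {A : V → V → Prop} {s t : V} {A' : V × V → V × V → Prop}

lemma fwd_isPath (hacyc : ∀ v, ¬ Relation.TransGen A v v)
    (hA' : ∀ e f : V × V, A' e f ↔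
      ((e = (s, s) ∨ e = (t, t) ∨ A e.1 e.2) ∧
       (f = (s, s) ∨ f = (t, t) ∨ A f.1 f.2) ∧ e.2 = f.1 ∧ e.1 ≠ f.2))
    {P : List V} (hP : IsPath A s t P) :
    IsPath A' (s, s) (t, t) ((s, s) :: (arcsOf P ++ [(t, t)])) := by
  obtain ⟨hlen, hhead, hlast, hnodup, hchain⟩ := hP
  obtain ⟨b, l, rfl⟩ : ∃ b l, P = s :: b :: l := by
    match P, hlen, hhead with
    | a :: b :: l, _, hh =>
      rw [List.head?_cons, Option.some_inj] at hh
      exact ⟨b, l, by rw [hh]⟩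
  set P : List V := s :: b :: l with hPdef
  have hPne : P ≠ [] := by simp [hPdef]
  have hgl : P.getLast hPne = t := by
    rw [List.getLast?_eq_getLast hPne, Option.some_inj] at hlast; exact hlast
  have hLmem : t ∉ P.dropLast := by
    intro hmem
    have hdl := List.dropLast_append_getLast hPne
    rw [hgl] at hdl
    have hnd2 : (P.dropLast ++ [t]).Nodup := by rw [hdl]; exact hnodup
    rcases List.nodup_append'.mp hnd2 with ⟨_, _, hdisj⟩
    exact hdisj hmem (by simp)
  have hsNot : (s, s) ∉ arcsOf P := fun h =>
    hacyc s (Relation.TransGen.single (mem_arcsOf hchain h))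
  have htNot : (t, t) ∉ arcsOf P := fun h =>
    hacyc t (Relation.TransGen.single (mem_arcsOf hchain h))
  have hst : s ≠ t := by
    intro h
    have ht : t ∈ b :: l := by
      have h2 : (b :: l).getLast? = some t := by
        rw [← List.getLast?_cons_cons (a := s)]; exact hlast
      have hne : (b :: l) ≠ [] := by simp
      rw [List.getLast?_eq_getLast hne, Option.some_inj] at h2
      rw [← h2]; exact List.getLast_mem hne
    exact (List.nodup_cons.mp hnodup).1 (h ▸ ht)
  have hEnodup : (arcsOf P).Nodup := by
    have hdn : ((arcsOf P).map Prod.fst).Nodup := by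
      rw [map_fst_arcsOf]; exact (List.dropLast_sublist P).nodup hnodup
    exact hdn.of_map _
  have hab : A s b := (List.isChain_cons_cons.mp hchain).1
  have hsb : s ≠ b := by
    intro h
    exact (List.nodup_cons.mp hnodup).1 (by rw [h]; simp)
  refine ⟨by simp, rfl, ?_, ?_, ?_⟩
  · rw [show ((s, s) :: (arcsOf P ++ [(t, t)])) = ((s, s) :: arcsOf P) ++ [(t, t)] from rfl,
      List.getLast?_concat]
  · rw [List.nodup_cons, List.mem_append]
    refine ⟨?_, ?_⟩
    · rintro (h | h)
      · exact hsNot h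
      · simp only [List.mem_singleton, Prod.mk.injEq] at h
        exact hst h.1
    · rw [List.nodup_append']
      refine ⟨hEnodup, by simp, ?_⟩
      intro x hx hx2
      simp only [List.mem_singleton] at hx2
      subst hx2
      exact htNot hx
  · have hEchain : (arcsOf P).Chain' A' :=
      (chain'_arcsOf hchain hnodup).imp (fun e f h =>
        (hA' e f).mpr ⟨Or.inr (Or.inr h.1), Or.inr (Or.inr h.2.1), h.2.2.1, h.2.2.2⟩)
    rw [List.Chain', List.isChain_cons]
    constructor
    · intro y hy
      rw [show arcsOf P = (s, b) :: arcsOf (b :: l) from rfl] at hy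
      simp only [List.cons_append, List.head?_cons, Option.mem_def, Option.some_inj] at hy
      subst hy
      exact (hA' _ _).mpr ⟨Or.inl rfl, Or.inr (Or.inr hab), rfl, hsb⟩
    · rw [List.isChain_append]
      refine ⟨hEchain, by simp, ?_⟩
      intro x hx y hy
      simp only [List.head?_cons, Option.mem_def, Option.some_inj] at hy
      subst hy
      have hEne : arcsOf P ≠ [] := by
        rw [show arcsOf P = (s, b) :: arcsOf (b :: l) from rfl]; simp
      rw [List.getLast?_eq_getLast hEne, Option.mem_def, Option.some_inj] at hx
      have hxmem : x ∈ arcsOf P := by rw [← hx]; exact List.getLast_mem hEne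
      have hxA : A x.1 x.2 := mem_arcsOf hchain hxmem
      have hx2 : x.2 = t := by
        have h1 : ((arcsOf P).map Prod.snd).getLast? = some x.2 := by
          rw [List.getLast?_map, List.getLast?_eq_getLast hEne, hx, Option.map_some]
        rw [map_snd_arcsOf] at h1
        have h2 : P.tail.getLast? = some t := by
          rw [show P.tail = b :: l from rfl, ← List.getLast?_cons_cons (a := s)]
          exact hlast
        rw [h2, Option.some_inj] at h1
        exact h1.symm
      have hx1 : x.1 ≠ t := by
        intro h
        have hmm : x.1 ∈ (arcsOf P).map Prod.fst := List.mem_map_of_mem hxmem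
        rw [map_fst_arcsOf] at hmm
        rw [h] at hmm
        exact hLmem hmm
      exact (hA' _ _).mpr ⟨Or.inr (Or.inr hxA), Or.inr (Or.inl rfl), hx2, hx1⟩

lemma bwd_isPath (hacyc : ∀ v, ¬ Relation.TransGen A v v)
    (hA' : ∀ e f : V × V, A' e f ↔
      ((e = (s, s) ∨ e = (t, t) ∨ A e.1 e.2) ∧
       (f = (s, s) ∨ f = (t, t) ∨ A f.1 f.2) ∧ e.2 = f.1 ∧ e.1 ≠ f.2))
    {P' : List (V × V)} (hP' : IsPath A' (s, s) (t, t) P') :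
    IsPath A s t (P'.tail.map Prod.fst) := by
  obtain ⟨hlen, hhead, hlast, hnodup, hchain⟩ := hP'
  obtain ⟨L, rfl⟩ : ∃ L, P' = (s, s) :: L := by
    match P', hlen, hhead with
    | x :: L, _, hh =>
      rw [List.head?_cons, Option.some_inj] at hh
      exact ⟨L, by rw [hh]⟩
  obtain ⟨y, M, rfl⟩ : ∃ y M, L = y :: M := by
    match L, hlen with
    | y :: M, _ => exact ⟨y, M, rfl⟩
  set L : List (V × V) := y :: M with hLdef
  have hLne : L ≠ [] := by simp [hLdef]
  have hLlast : L.getLast? = some (t, t) := by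
    rw [hLdef, ← List.getLast?_cons_cons (a := (s, s))]; exact hlast
  have hMne : M ≠ [] := by
    rintro rfl
    have h0 : y = (t, t) := by
      simpa [hLdef] using hLlast
    subst h0
    have h1 : A' (s, s) (t, t) := (List.isChain_cons_cons.mp hchain).1
    obtain ⟨_, _, h2, h3⟩ := (hA' _ _).mp h1
    exact h3 h2
  have hL2 : 2 ≤ L.length := by
    rw [hLdef, List.length_cons]
    have := List.length_pos_iff.mpr hMne
    omega
  have hgl : L.getLast hLne = (t, t) := by
    rw [List.getLast?_eq_getLast hLne, Option.some_inj] at hLlast; exact hLlast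
  have hssNot : (s, s) ∉ L := (List.nodup_cons.mp hnodup).1
  have hLnodup : L.Nodup := (List.nodup_cons.mp hnodup).2
  have hchainL : L.Chain' A' := hchain.tail
  have harc : ∀ (i : ℕ) (h : i + 1 < L.length),
      A (L[i]'(by omega)).1 (L[i]'(by omega)).2 ∧ (L[i]'(by omega)).2 = (L[i+1]'h).1 := by
    intro i h
    obtain ⟨he, _, h21, _⟩ := (hA' _ _).mp (chain'_getElem hchainL i h)
    refine ⟨?_, h21⟩
    rcases he with he | he | he
    · exact absurd (he ▸ List.getElem_mem (by omega)) hssNot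
    · exfalso
      have hEl : L[i]'(by omega) = L[L.length - 1]'(by omega) := by
        rw [he, ← hgl, L.getLast_eq_getElem hLne]
      have := hLnodup.getElem_inj_iff.mp hEl
      omega
    · exact he
  have hchainA : (L.map Prod.fst).Chain' A := by
    apply chain'_of_getElem
    intro i hi
    rw [List.length_map] at hi
    rw [List.getElem_map, List.getElem_map]
    obtain ⟨h1, h2⟩ := harc i hi
    rw [← h2]
    exact h1
  refine ⟨?_, ?_, ?_, ?_, ?_⟩
  · rw [List.tail_cons, List.length_map]; exact hL2
  · rw [List.tail_cons, hLdef, List.map_cons, List.head?_cons, Option.some_inj]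
    have h1 : A' (s, s) y := (List.isChain_cons_cons.mp hchain).1
    obtain ⟨_, _, h2, _⟩ := (hA' _ _).mp h1
    exact h2.symm
  · rw [List.tail_cons, List.getLast?_map, hLlast]; rfl
  · rw [List.tail_cons]; exact nodup_of_chain' hacyc hchainA
  · rw [List.tail_cons]; exact hchainA

lemma bwd_fwd {P : List V} (hP : IsPath A s t P) :
    ((arcsOf P ++ [(t, t)]).map Prod.fst : List V) = P := by
  obtain ⟨hlen, _, hlast, _, _⟩ := hP
  have hPne : P ≠ [] := by intro h; subst h; simp at hlen
  have hgl : P.getLast hPne = t := by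
    rw [List.getLast?_eq_getLast hPne, Option.some_inj] at hlast; exact hlast
  rw [List.map_append, map_fst_arcsOf, show ([(t, t)].map Prod.fst) = [t] from rfl,
    ← hgl, List.dropLast_append_getLast]

lemma fwd_bwd
    (hA' : ∀ e f : V × V, A' e f ↔
      ((e = (s, s) ∨ e = (t, t) ∨ A e.1 e.2) ∧
       (f = (s, s) ∨ f = (t, t) ∨ A f.1 f.2) ∧ e.2 = f.1 ∧ e.1 ≠ f.2))
    {P' : List (V × V)} (hP' : IsPath A' (s, s) (t, t) P') :
    ((s, s) :: (arcsOf (P'.tail.map Prod.fst) ++ [(t, t)])) = P' := by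
  obtain ⟨hlen, hhead, hlast, hnodup, hchain⟩ := hP'
  obtain ⟨L, rfl⟩ : ∃ L, P' = (s, s) :: L := by
    match P', hlen, hhead with
    | x :: L, _, hh =>
      rw [List.head?_cons, Option.some_inj] at hh
      exact ⟨L, by rw [hh]⟩
  have hLne : L ≠ [] := by
    intro h; subst h; simp at hlen
  have hLlast : L.getLast? = some (t, t) := by
    match L, hLne with
    | y :: M, _ => rw [← List.getLast?_cons_cons (a := (s, s))]; exact hlast
  have hgl : L.getLast hLne = (t, t) := by
    rw [List.getLast?_eq_getLast hLne, Option.some_inj] at hLlast; exact hLlast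
  have hchainL : L.Chain' (fun e f => e.2 = f.1) :=
    (hchain.tail).imp (fun e f h => ((hA' e f).mp h).2.2.1)
  rw [List.tail_cons, arcsOf_map_fst hchainL, ← hgl, List.dropLast_append_getLast]

lemma cost_fwd (hacyc : ∀ v, ¬ Relation.TransGen A v v)
    {c : V × V → ℝ} {Q : V × V → V × V → ℝ}
    (hQs : ∀ e f, Q e f = Q f e) (hQd : ∀ e, Q e e = 0)
    (hadj : ∀ e f : V × V, A e.1 e.2 → A f.1 f.2 →
      ¬(e.2 = f.1 ∨ f.2 = e.1) → Q e f = 0)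
    {c' : (V × V) × (V × V) → ℝ}
    (hc' : ∀ e f : V × V, c' (e, f) =
      if e = (s, s) then c f else if f = (t, t) then 0 else c f + 2 * Q e f)
    {P : List V} (hP : IsPath A s t P) :
    cost c Q P = linCost c' ((s, s) :: (arcsOf P ++ [(t, t)])) := by
  obtain ⟨hlen, hhead, hlast, hnodup, hchain⟩ := hP
  set d : V × V := (s, s) with hd
  set E : List (V × V) := arcsOf P with hE
  have hmP : E.length = P.length - 1 := length_arcsOf P
  obtain ⟨k, hk⟩ : ∃ k, E.length = k + 1 := ⟨E.length - 1, by omega⟩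
  have hEget : ∀ (i : ℕ) (hi : i < E.length),
      E.getD i d = (P[i]'(by omega), P[i+1]'(by omega)) := by
    intro i hi
    rw [List.getD_eq_getElem _ _ hi]
    exact getElem_arcsOf P i (by omega)
  have hsNot : (s, s) ∉ E := fun h =>
    hacyc s (Relation.TransGen.single (mem_arcsOf hchain h))
  have htNot : (t, t) ∉ E := fun h =>
    hacyc t (Relation.TransGen.single (mem_arcsOf hchain h))
  have hmem : ∀ i, i < E.length → E.getD i d ∈ E := by
    intro i hi
    rw [List.getD_eq_getElem _ _ hi]
    exact List.getElem_mem hi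
  have hnotS : ∀ i, i < E.length → E.getD i d ≠ (s, s) := fun i hi h => hsNot (h ▸ hmem i hi)
  have hnotT : ∀ i, i < E.length → E.getD i d ≠ (t, t) := fun i hi h => htNot (h ▸ hmem i hi)
  have hQzero : ∀ i j, i < j → j < E.length → j ≠ i + 1 →
      Q (E.getD i d) (E.getD j d) = 0 := by
    intro i j hij hj hne
    rw [hEget i (by omega), hEget j hj]
    apply hadj
    · exact chain'_getElem hchain i (by omega)
    · exact chain'_getElem hchain j (by omega)
    · rintro (h | h)
      · have := hnodup.getElem_inj_iff.mp h
        omega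
      · have := hnodup.getElem_inj_iff.mp h
        omega
  have hdd : ((E.map fun e => (E.map fun f => Q e f).sum).sum)
      = 2 * ∑ i ∈ Finset.range k, Q (E.getD i d) (E.getD (i+1) d) := by
    rw [sum_map_getD (fun e => (E.map fun f => Q e f).sum) d E]
    rw [Finset.sum_congr rfl (fun i (_ : i ∈ Finset.range E.length) =>
      sum_map_getD (fun f => Q (E.getD i d) f) d E)]
    have := double_sum_adj (fun i j => Q (E.getD i d) (E.getD j d))
      (fun i j => hQs _ _) E.length (fun i _ => hQd _) hQzero
    rw [this, hk]
    simp
  -- getD facts for F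
  have hFsucc : ∀ i, i < E.length →
      ((s, s) :: (E ++ [(t, t)])).getD (i+1) d = E.getD i d := by
    intro i hi
    rw [List.getD_cons_succ, List.getD_append _ _ _ _ hi]
  have hFlast : ((s, s) :: (E ++ [(t, t)])).getD (E.length + 1) d = (t, t) := by
    rw [List.getD_cons_succ]
    rw [List.getD_eq_getElem _ _ (by simp)]
    rw [List.getElem_append_right (by omega)]
    simp
  have hAFget : ∀ i, i < E.length + 1 →
      (arcsOf ((s, s) :: (E ++ [(t, t)]))).getD i (d, d)
        = (((s, s) :: (E ++ [(t, t)])).getD i d, ((s, s) :: (E ++ [(t, t)])).getD (i+1) d) := by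
    intro i hi
    have hFlen : ((s, s) :: (E ++ [(t, t)])).length = E.length + 2 := by simp
    rw [List.getD_eq_getElem _ _ (by rw [length_arcsOf, hFlen]; omega),
        List.getD_eq_getElem _ _ (by rw [hFlen]; omega),
        List.getD_eq_getElem _ _ (by rw [hFlen]; omega)]
    exact getElem_arcsOf _ i (by rw [hFlen]; omega)
  have hlin : linCost c' ((s, s) :: (E ++ [(t, t)])) =
      ∑ i ∈ Finset.range (E.length + 1),
        c' (((s, s) :: (E ++ [(t, t)])).getD i d, ((s, s) :: (E ++ [(t, t)])).getD (i+1) d) := by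
    rw [linCost, sum_map_getD c' (d, d)]
    have hL : (arcsOf ((s, s) :: (E ++ [(t, t)]))).length = E.length + 1 := by
      rw [length_arcsOf]; simp
    rw [hL]
    exact Finset.sum_congr rfl (fun i hi => by rw [hAFget i (Finset.mem_range.mp hi)])
  -- evaluate the three kinds of terms
  have hg0 : c' (((s, s) :: (E ++ [(t, t)])).getD 0 d, ((s, s) :: (E ++ [(t, t)])).getD 1 d)
      = c (E.getD 0 d) := by
    rw [show ((s, s) :: (E ++ [(t, t)])).getD 0 d = (s, s) from rfl,
      show (1 : ℕ) = 0 + 1 from rfl, hFsucc 0 (by omega), hc']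
    simp [hd]
  have hglast : c' (((s, s) :: (E ++ [(t, t)])).getD (k+1) d,
      ((s, s) :: (E ++ [(t, t)])).getD (k+2) d) = 0 := by
    have h1 : k + 1 = E.length := by omega
    have h2 : k + 2 = E.length + 1 := by omega
    rw [show k + 1 = k + 1 from rfl, h2, hFlast,
      show ((s,s) :: (E ++ [(t,t)])).getD (k+1) d = E.getD k d from hFsucc k (by omega), hc']
    rw [if_neg (hnotS k (by omega)), if_pos rfl]
  have hgsucc : ∀ i, i < k →
      c' (((s, s) :: (E ++ [(t, t)])).getD (i+1) d, ((s, s) :: (E ++ [(t, t)])).getD (i+2) d)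
        = c (E.getD (i+1) d) + 2 * Q (E.getD i d) (E.getD (i+1) d) := by
    intro i hi
    rw [hFsucc i (by omega), show i + 2 = (i+1) + 1 from rfl, hFsucc (i+1) (by omega), hc']
    rw [if_neg (hnotS i (by omega)), if_neg (hnotT (i+1) (by omega))]
  have hlinc : linCost c P =
      (∑ i ∈ Finset.range k, c (E.getD (i+1) d)) + c (E.getD 0 d) := by
    rw [linCost, ← hE, sum_map_getD c d, hk, Finset.sum_range_succ']
  rw [cost, ← hE, hdd, hlinc, hlin, hk]
  rw [show k + 1 + 1 = (k + 1) + 1 from rfl, Finset.sum_range_succ, hglast, add_zero,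
    Finset.sum_range_succ', hg0]
  rw [Finset.sum_congr rfl (fun i hi => hgsucc i (Finset.mem_range.mp hi))]
  rw [Finset.sum_add_distrib, Finset.mul_sum]
  ring

end MainLemmas

/-- The map `P ↦ (V_{(s,s)}, V_{(v_1,v_2)}, …, V_{(v_{k-1},v_k)}, V_{(t,t)})` is a
cost-preserving bijection between the `s`-`t` paths of an adjacent QSPP instance on a
DAG `G` and the `V_{(s,s)}`-`V_{(t,t)}` paths of the auxiliary SPP instance on `G'`. -/
theorem stmt_1 {V : Type*} (A : V → V → Prop) (s t : V)
    (hacyc : ∀ v, ¬ Relation.TransGen A v v)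
    (c : V × V → ℝ) (Q : V × V → V × V → ℝ)
    (hc : ∀ e, 0 ≤ c e) (hQ0 : ∀ e f, 0 ≤ Q e f)
    (hQs : ∀ e f, Q e f = Q f e) (hQd : ∀ e, Q e e = 0)
    (hadj : ∀ e f : V × V, A e.1 e.2 → A f.1 f.2 →
      ¬(e.2 = f.1 ∨ f.2 = e.1) → Q e f = 0)
    (A' : (V × V) → (V × V) → Prop)
    (hA' : ∀ e f : V × V, A' e f ↔
      ((e = (s, s) ∨ e = (t, t) ∨ A e.1 e.2) ∧
       (f = (s, s) ∨ f = (t, t) ∨ A f.1 f.2) ∧ e.2 = f.1 ∧ e.1 ≠ f.2))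
    (c' : (V × V) × (V × V) → ℝ)
    (hc' : ∀ e f : V × V, c' (e, f) =
      if e = (s, s) then c f else if f = (t, t) then 0 else c f + 2 * Q e f) :
    ∃ F : {P : List V // IsPath A s t P} ≃
          {P' : List (V × V) // IsPath A' (s, s) (t, t) P'},
      ∀ P : {P : List V // IsPath A s t P},
        (F P).val = (s, s) :: (arcsOf P.val ++ [(t, t)]) ∧
        cost c Q P.val = linCost c' (F P).val := by
  refine ⟨{
      toFun := fun P => ⟨(s, s) :: (arcsOf P.val ++ [(t, t)]), fwd_isPath hacyc hA' P.2⟩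
      invFun := fun P' => ⟨P'.val.tail.map Prod.fst, bwd_isPath hacyc hA' P'.2⟩
      left_inv := fun P => Subtype.ext (by
        simp only [List.tail_cons]
        exact bwd_fwd P.2)
      right_inv := fun P' => Subtype.ext (fwd_bwd hA' P'.2) },
    fun P => ⟨rfl, cost_fwd hacyc hQs hQd hadj hc' P.2⟩⟩
end

section
/- Let I = (G,s,t,c,Q) be a QSPP instance such that Q + Diag(c) is a nonnegative symmetric product matrix, i.e., Q + Diag(c) = a aᵀ for some nonnegative vector a indexed by the arcs of G. Then for every s-t path P in G, C(P,c,Q) = (Σ_{e∈P} a_e)². Consequently, an s-t path minimizes C(P,c,Q) if and only if it minimizes the linear cost C(P,a), so an optimal solution of I is obtained by solving the shortest path problem with cost vector a. -/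
open Classical


lemma chain'_zip {V : Type*} {A : V → V → Prop} :
    ∀ (P : List V), P.Chain' A → ∀ e ∈ P.zip P.tail, A e.1 e.2 := by
  intro P
  induction P with
  | nil => intro _ e he; simp at he
  | cons x xs ih =>
    intro h e he
    cases xs with
    | nil => simp at he
    | cons y ys =>
      rw [List.Chain', List.isChain_cons_cons] at h
      simp only [List.tail_cons, List.zip_cons_cons, List.mem_cons] at he
      rcases he with rfl | he
      · exact h.1
      · exact ih h.2 e he

lemma nodup_zip {V : Type*} :
    ∀ (P : List V), P.Nodup → (P.zip P.tail).Nodup := by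
  intro P
  induction P with
  | nil => simp
  | cons x xs ih =>
    intro h
    cases xs with
    | nil => simp
    | cons y ys =>
      rw [List.nodup_cons] at h
      simp only [List.tail_cons, List.zip_cons_cons]
      refine List.nodup_cons.mpr ⟨?_, ih h.2⟩
      intro hmem
      exact h.1 (List.of_mem_zip hmem).1

/-- If `Q + Diag(c) = a aᵀ` for a nonnegative vector `a`, then `C(P,c,Q) = (Σ_{e∈P} a_e)²`
for every `s`-`t` path `P`; consequently a path minimizes the quadratic cost iff it
minimizes the linear cost given by `a`. -/
theorem stmt_6 {V : Type*} (A : V → V → Prop) (s t : V)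
    (c : V × V → ℝ) (Q : V × V → V × V → ℝ)
    (hc : ∀ e, 0 ≤ c e) (hQ0 : ∀ e f, 0 ≤ Q e f)
    (hQs : ∀ e f, Q e f = Q f e) (hQd : ∀ e, Q e e = 0)
    (a : V × V → ℝ) (ha : ∀ e, 0 ≤ a e)
    (hprod : ∀ e f : V × V, A e.1 e.2 → A f.1 f.2 →
      Q e f + (if e = f then c e else 0) = a e * a f) :
    (∀ P, IsPath A s t P → cost c Q P = (linCost a P) ^ 2) ∧
    ∀ P, IsPath A s t P →
      ((∀ P', IsPath A s t P' → cost c Q P ≤ cost c Q P') ↔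
       (∀ P', IsPath A s t P' → linCost a P ≤ linCost a P')) := by
  have key : ∀ P, IsPath A s t P → cost c Q P = (linCost a P) ^ 2 := by
    intro P hP
    obtain ⟨-, -, -, hnd, hch⟩ := hP
    have hA : ∀ e ∈ arcsOf P, A e.1 e.2 := chain'_zip P hch
    have hndL : (arcsOf P).Nodup := nodup_zip P hnd
    set S : Finset (V × V) := (arcsOf P).toFinset with hS
    have hsum : ∀ f : V × V → ℝ, ((arcsOf P).map f).sum = S.sum f := by
      intro f
      rw [hS, List.sum_toFinset f hndL]
    have hmemS : ∀ e ∈ S, A e.1 e.2 := by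
      intro e he
      exact hA e (List.mem_toFinset.mp he)
    have : cost c Q P = ∑ e ∈ S, ∑ f ∈ S, Q e f + ∑ e ∈ S, c e := by
      unfold cost linCost
      rw [hsum, hsum]
      congr 1
      refine Finset.sum_congr rfl fun e _ => ?_
      exact hsum _
    rw [this]
    have hlin : linCost a P = ∑ e ∈ S, a e := hsum a
    rw [hlin, sq, Finset.sum_mul_sum]
    rw [← Finset.sum_add_distrib]
    refine Finset.sum_congr rfl fun e he => ?_
    have hce : ∑ f ∈ S, (if e = f then c e else 0) = c e := by
      simp [Finset.sum_ite_eq, he]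
    rw [← hce, ← Finset.sum_add_distrib]
    refine Finset.sum_congr rfl fun f hf => ?_
    exact hprod e f (hmemS e he) (hmemS f hf)
  refine ⟨key, fun P hP => ?_⟩
  have hnn : ∀ P', linCost a P' ≥ 0 := by
    intro P'
    apply List.sum_nonneg
    intro x hx
    obtain ⟨e, -, rfl⟩ := List.mem_map.mp hx
    exact ha e
  constructor
  · intro h P' hP'
    have := h P' hP'
    rw [key P hP, key P' hP'] at this
    exact (pow_le_pow_iff_left₀ (hnn P) (hnn P') (by norm_num)).mp this
  · intro h P' hP'
    rw [key P hP, key P' hP']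
    exact pow_le_pow_left₀ (hnn P) (h P' hP') 2
end
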